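/- Lyapunov ellipsoid containment bound for the position trajectory. Let A ∈ ℝ^{N×N}, let P ∈ ℝ^{N×N} be symmetric positive definite with AᵀP + PA negative semidefinite, let B ∈ ℝ^{N×d}, and let ξ*, ξ₀ ∈ ℝ^N. Define ξ(t) = ξ* + exp(t·A)·(ξ₀ − ξ*) (the solution of ξ̇ = A(ξ − ξ*) with ξ(0) = ξ₀). Then for all t ≥ 0, ‖Bᵀ(ξ(t) − ξ*)‖ ≤ ‖BᵀP⁻¹B‖^{1/2} · √((ξ₀ − ξ*)ᵀ P (ξ₀ − ξ*)), where ‖·‖ denotes the Euclidean norm on vectors and the induced operator norm on matrices. -/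

import Mathlib

open Matrix
open scoped RealInnerProductSpace

-- helper lemmas, test first
lemma toEL_mul {m n p : ℕ} (M : Matrix (Fin m) (Fin n) ℝ) (K : Matrix (Fin n) (Fin p) ℝ)
    (v : EuclideanSpace ℝ (Fin p)) :
    Matrix.toEuclideanLin (M * K) v = Matrix.toEuclideanLin M (Matrix.toEuclideanLin K v) := by
  simp [Matrix.toEuclideanLin_apply, Matrix.mulVec_mulVec]

lemma inner_toEL {n : ℕ} (M : Matrix (Fin n) (Fin n) ℝ) (x y : EuclideanSpace ℝ (Fin n)) :
    ⟪x, Matrix.toEuclideanLin M y⟫ =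
      (WithLp.equiv 2 (Fin n → ℝ) x) ⬝ᵥ (M *ᵥ WithLp.equiv 2 (Fin n → ℝ) y) := by
  rw [EuclideanSpace.inner_eq_star_dotProduct]
  simp [Matrix.toEuclideanLin_apply]
  exact dotProduct_comm _ _

lemma inner_EL {n : ℕ} (x y : EuclideanSpace ℝ (Fin n)) :
    ⟪x, y⟫ = (WithLp.equiv 2 (Fin n → ℝ) x) ⬝ᵥ (WithLp.equiv 2 (Fin n → ℝ) y) := by
  rw [EuclideanSpace.inner_eq_star_dotProduct]; simp; exact dotProduct_comm _ _

noncomputable def matrixOpNorm {m n : ℕ} (M : Matrix (Fin m) (Fin n) ℝ) : ℝ :=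
  ‖LinearMap.toContinuousLinearMap (Matrix.toEuclideanLin M)‖

lemma matrixOpNorm_mul_transpose {n d : ℕ} (M : Matrix (Fin d) (Fin n) ℝ) :
    matrixOpNorm (M * Mᵀ) =
      ‖LinearMap.toContinuousLinearMap (Matrix.toEuclideanLin M)‖ ^ 2 := by
  set T := LinearMap.toContinuousLinearMap (Matrix.toEuclideanLin M) with hT
  have hadj : LinearMap.toContinuousLinearMap (Matrix.toEuclideanLin Mᵀ) =
      ContinuousLinearMap.adjoint T := by
    rw [← Matrix.conjTranspose_eq_transpose_of_trivial,
      Matrix.toEuclideanLin_conjTranspose_eq_adjoint,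
      LinearMap.adjoint_toContinuousLinearMap]
  have hcomp : LinearMap.toContinuousLinearMap (Matrix.toEuclideanLin (M * Mᵀ)) =
      T ∘L ContinuousLinearMap.adjoint T := by
    ext x
    simp only [ContinuousLinearMap.comp_apply, ← hadj, LinearMap.coe_toContinuousLinearMap',
      hT]
    rw [toEL_mul M Mᵀ x]
    rw [← hT, ← hadj]
    rfl
  rw [matrixOpNorm, hcomp]
  have := ContinuousLinearMap.norm_adjoint_comp_self (ContinuousLinearMap.adjoint T)
  rw [ContinuousLinearMap.adjoint_adjoint] at this
  rw [this]
  rw [(ContinuousLinearMap.adjoint (𝕜 := ℝ)).norm_map T]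
  ring

open scoped MatrixOrder in
lemma static_bound {N d : ℕ} (P : Matrix (Fin N) (Fin N) ℝ) (hP : P.PosDef)
    (B : Matrix (Fin N) (Fin d) ℝ) (x : EuclideanSpace ℝ (Fin N)) :
    ‖(Matrix.toEuclideanLin Bᵀ) x‖ ^ 2 ≤
      matrixOpNorm (Bᵀ * P⁻¹ * B) * ⟪x, (Matrix.toEuclideanLin P) x⟫ := by
  classical
  set S := CFC.sqrt P with hSdef
  have hSS : S * S = P := CFC.sqrt_mul_sqrt_self P hP.posSemidef.nonneg
  have hSH : Sᵀ = S := by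
    rw [← Matrix.conjTranspose_eq_transpose_of_trivial]
    exact (CFC.sqrt_nonneg P).posSemidef.1
  have hdet : IsUnit S.det := by
    have hPdet : P.det ≠ 0 := hP.det_pos.ne'
    have : S.det * S.det = P.det := by rw [← Matrix.det_mul, hSS]
    refine isUnit_iff_ne_zero.2 fun h => hPdet ?_
    rw [← this, h, mul_zero]
  have hSinv : S⁻¹ * S = 1 := Matrix.nonsing_inv_mul S hdet
  set M := Bᵀ * S⁻¹ with hM
  have key1 : Bᵀ = M * S := by rw [hM, Matrix.mul_assoc, hSinv, Matrix.mul_one]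
  have hMT : Mᵀ = S⁻¹ * B := by
    rw [hM, Matrix.transpose_mul, Matrix.transpose_nonsing_inv, hSH, Matrix.transpose_transpose]
  have key2 : Bᵀ * P⁻¹ * B = M * Mᵀ := by
    rw [hMT, hM, ← hSS, Matrix.mul_inv_rev]
    simp only [Matrix.mul_assoc]
  set T := LinearMap.toContinuousLinearMap (Matrix.toEuclideanLin M) with hT
  have hnorm : matrixOpNorm (Bᵀ * P⁻¹ * B) = ‖T‖ ^ 2 := by
    rw [key2, matrixOpNorm_mul_transpose]
  have hSx : ‖Matrix.toEuclideanLin S x‖ ^ 2 = ⟪x, Matrix.toEuclideanLin P x⟫ := by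
    rw [← real_inner_self_eq_norm_sq, inner_toEL, inner_toEL,
      WithLp.equiv_apply, Matrix.ofLp_toEuclideanLin_apply, ← hSS, ← Matrix.mulVec_mulVec]
    conv_rhs => rw [Matrix.dotProduct_mulVec, ← hSH, Matrix.vecMul_transpose]
    rw [hSH]
    rfl
  have hBx : ‖(Matrix.toEuclideanLin Bᵀ) x‖ ≤ ‖T‖ * ‖Matrix.toEuclideanLin S x‖ := by
    rw [key1, toEL_mul]
    exact T.le_opNorm _
  calc ‖(Matrix.toEuclideanLin Bᵀ) x‖ ^ 2
      ≤ (‖T‖ * ‖Matrix.toEuclideanLin S x‖) ^ 2 := by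
        apply pow_le_pow_left₀ (norm_nonneg _) hBx
    _ = ‖T‖ ^ 2 * ‖Matrix.toEuclideanLin S x‖ ^ 2 := by ring
    _ = matrixOpNorm (Bᵀ * P⁻¹ * B) * ⟪x, Matrix.toEuclideanLin P x⟫ := by
        rw [hnorm, hSx]

lemma dot1 {n : ℕ} (M K : Matrix (Fin n) (Fin n) ℝ) (y : EuclideanSpace ℝ (Fin n)) :
    ⟪y, Matrix.toEuclideanLin M (Matrix.toEuclideanLin K y)⟫ =
      (WithLp.equiv 2 (Fin n → ℝ) y) ⬝ᵥ (M * K) *ᵥ (WithLp.equiv 2 (Fin n → ℝ) y) := by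
  rw [← toEL_mul, inner_toEL]

lemma dot2 {n : ℕ} (M K : Matrix (Fin n) (Fin n) ℝ) (y : EuclideanSpace ℝ (Fin n)) :
    ⟪Matrix.toEuclideanLin K y, Matrix.toEuclideanLin M y⟫ =
      (WithLp.equiv 2 (Fin n → ℝ) y) ⬝ᵥ (Kᵀ * M) *ᵥ (WithLp.equiv 2 (Fin n → ℝ) y) := by
  rw [inner_toEL, WithLp.equiv_apply, Matrix.ofLp_toEuclideanLin_apply]
  conv_rhs => rw [← Matrix.mulVec_mulVec, Matrix.dotProduct_mulVec, Matrix.vecMul_transpose]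
  rfl

section main

attribute [local instance] Matrix.linftyOpNormedAddCommGroup Matrix.linftyOpNormedRing
  Matrix.linftyOpNormedAlgebra

/-- Lyapunov ellipsoid containment bound for the position trajectory:
along `ξ(t) = ξ* + exp(tA)(ξ₀ − ξ*)`, the projected deviation `‖Bᵀ(ξ(t) − ξ*)‖` is
bounded by the projected Lyapunov ellipsoid radius `‖BᵀP⁻¹B‖^{1/2}·‖ξ₀ − ξ*‖_P`. -/
theorem lyapunov_ellipsoid_containment {N d : ℕ}
    (A P : Matrix (Fin N) (Fin N) ℝ) (hP : P.PosDef)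
    (hNeg : (-(Aᵀ * P + P * A)).PosSemidef)
    (B : Matrix (Fin N) (Fin d) ℝ)
    (ξstar ξ0 : EuclideanSpace ℝ (Fin N))
    (ξ : ℝ → EuclideanSpace ℝ (Fin N))
    (hξ : ∀ t : ℝ, ξ t = ξstar +
      (Matrix.toEuclideanLin (NormedSpace.exp (t • A))) (ξ0 - ξstar)) :
    ∀ t : ℝ, 0 ≤ t →
      ‖(Matrix.toEuclideanLin Bᵀ) (ξ t - ξstar)‖ ≤
        Real.sqrt (matrixOpNorm (Bᵀ * P⁻¹ * B)) *
          Real.sqrt ⟪ξ0 - ξstar, (Matrix.toEuclideanLin P) (ξ0 - ξstar)⟫ := by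
  intro t ht
  set v := ξ0 - ξstar with hv
  set x : ℝ → EuclideanSpace ℝ (Fin N) :=
    fun s => Matrix.toEuclideanLin (NormedSpace.exp (s • A)) v with hxdef
  have hξx : ∀ s, ξ s - ξstar = x s := fun s => by rw [hξ s]; simp [hxdef]
  -- the evaluation map M ↦ (toEuclideanLin M) v as a continuous linear map
  let Llin : Matrix (Fin N) (Fin N) ℝ →ₗ[ℝ] EuclideanSpace ℝ (Fin N) :=
    { toFun := fun M => Matrix.toEuclideanLin M v
      map_add' := fun M M' => by simp [map_add]
      map_smul' := fun c M => by simp }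
  let L := LinearMap.toContinuousLinearMap Llin
  have hxd : ∀ s : ℝ, HasDerivAt x (Matrix.toEuclideanLin A (x s)) s := by
    intro s
    have h1 := hasDerivAt_exp_smul_const' (𝕂 := ℝ) A s
    have h2 := L.hasFDerivAt.comp_hasDerivAt s h1
    have h3 : L (A * NormedSpace.exp (s • A)) = Matrix.toEuclideanLin A (x s) := by
      show Matrix.toEuclideanLin (A * NormedSpace.exp (s • A)) v = _
      rw [toEL_mul]
    exact h2.congr_deriv h3
  let LP := LinearMap.toContinuousLinearMap (Matrix.toEuclideanLin P)
  set g : ℝ → ℝ := fun s => ⟪x s, Matrix.toEuclideanLin P (x s)⟫ with hgdef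
  have hgd : ∀ s : ℝ, HasDerivAt g
      (⟪x s, Matrix.toEuclideanLin P (Matrix.toEuclideanLin A (x s))⟫ +
       ⟪Matrix.toEuclideanLin A (x s), Matrix.toEuclideanLin P (x s)⟫) s := by
    intro s
    have h2 : HasDerivAt (fun u => LP (x u)) (LP (Matrix.toEuclideanLin A (x s))) s :=
      LP.hasFDerivAt.comp_hasDerivAt s (hxd s)
    exact (hxd s).inner (𝕜 := ℝ) h2
  have hgnonpos : ∀ s : ℝ,
      (⟪x s, Matrix.toEuclideanLin P (Matrix.toEuclideanLin A (x s))⟫ +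
       ⟪Matrix.toEuclideanLin A (x s), Matrix.toEuclideanLin P (x s)⟫) ≤ 0 := by
    intro s
    set u := WithLp.equiv 2 (Fin N → ℝ) (x s) with hu
    have e1 : ⟪x s, Matrix.toEuclideanLin P (Matrix.toEuclideanLin A (x s))⟫ =
        u ⬝ᵥ (P * A) *ᵥ u := dot1 P A (x s)
    have e2 : ⟪Matrix.toEuclideanLin A (x s), Matrix.toEuclideanLin P (x s)⟫ =
        u ⬝ᵥ (Aᵀ * P) *ᵥ u := dot2 P A (x s)
    have hsum := hNeg.dotProduct_mulVec_nonneg u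
    simp only [Matrix.neg_mulVec, dotProduct_neg, star_trivial] at hsum
    rw [e1, e2]
    have : u ⬝ᵥ (Aᵀ * P) *ᵥ u + u ⬝ᵥ (P * A) *ᵥ u = u ⬝ᵥ (Aᵀ * P + P * A) *ᵥ u := by
      rw [Matrix.add_mulVec, dotProduct_add]
    linarith
  have hdiff : Differentiable ℝ g := fun s => (hgd s).differentiableAt
  have hanti : AntitoneOn g (Set.Ici 0) := by
    apply antitoneOn_of_deriv_nonpos (convex_Ici 0) hdiff.continuous.continuousOn
      (fun s _ => (hdiff s).differentiableWithinAt)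
    intro s _
    rw [(hgd s).deriv]
    exact hgnonpos s
  have hx0 : x 0 = v := by
    simp [hxdef, Matrix.toEuclideanLin_apply, Matrix.one_mulVec]
  have hg0 : g t ≤ ⟪v, Matrix.toEuclideanLin P v⟫ := by
    have h1 : g t ≤ g 0 := hanti Set.self_mem_Ici ht ht
    have h2 : g 0 = ⟪v, Matrix.toEuclideanLin P v⟫ := by
      show ⟪x 0, Matrix.toEuclideanLin P (x 0)⟫ = _
      rw [hx0]
    rwa [h2] at h1
  have hC : (0:ℝ) ≤ matrixOpNorm (Bᵀ * P⁻¹ * B) := norm_nonneg _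
  have hchain : ‖(Matrix.toEuclideanLin Bᵀ) (x t)‖ ^ 2 ≤
      matrixOpNorm (Bᵀ * P⁻¹ * B) * ⟪v, Matrix.toEuclideanLin P v⟫ :=
    (static_bound P hP B (x t)).trans (mul_le_mul_of_nonneg_left hg0 hC)
  rw [hξx t]
  rw [show ‖(Matrix.toEuclideanLin Bᵀ) (x t)‖ =
      Real.sqrt (‖(Matrix.toEuclideanLin Bᵀ) (x t)‖ ^ 2) from
      (Real.sqrt_sq (norm_nonneg _)).symm,
    ← Real.sqrt_mul hC]
  exact Real.sqrt_le_sqrt hchain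

end main
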